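/- Let Γ = {P_1,…,P_m} ⊂ P^n_K be a reduced non-degenerate finite set of points, and let δ = min{δ(P_i) : i = 1,…,m} be the minimum of the degrees of the points of Γ. If δ ≥ 2, then d(Γ)_{δ−1} ≥ 2. -/
import Mathlib


open MvPolynomial

noncomputable section

namespace PointsMinDist

variable {K : Type} [Field K]

/-- The (homogeneous) vanishing ideal of a set of points of projective space:
all polynomials vanishing at every representative vector of every point. -/
def vanishingIdeal {m : ℕ} (Γ : Set (Projectivization K (Fin m → K))) :
    Ideal (MvPolynomial (Fin m) K) where
  carrier := {f | ∀ P ∈ Γ, ∀ (v : Fin m → K) (hv : v ≠ 0),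
      Projectivization.mk K v hv = P → MvPolynomial.eval v f = 0}
  zero_mem' := by intro P hP v hv h; simp
  add_mem' := by
    intro f g hf hg P hP v hv h
    simp [hf P hP v hv h, hg P hP v hv h]
  smul_mem' := by
    intro c f hf P hP v hv h
    simp [smul_eq_mul, hf P hP v hv h]

/-- The degree-`d` graded component of a (homogeneous) ideal, as a `K`-subspace. -/
def degPart {m : ℕ} (I : Ideal (MvPolynomial (Fin m) K)) (d : ℕ) :
    Submodule K (MvPolynomial (Fin m) K) :=
  Submodule.restrictScalars K I ⊓ homogeneousSubmodule (Fin m) K d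

/-- `K`-dimension of the degree-`d` component of an ideal. -/
def hdim {m : ℕ} (I : Ideal (MvPolynomial (Fin m) K)) (d : ℕ) : ℕ :=
  Module.finrank K (degPart I d)

/-- Hilbert function of `R/I` in degree `d`. -/
def HF {m : ℕ} (I : Ideal (MvPolynomial (Fin m) K)) (d : ℕ) : ℕ :=
  Module.finrank K (homogeneousSubmodule (Fin m) K d) - hdim I d

open Classical in
/-- `hyp Γ`: the maximum number of points of `Γ` contained in a hyperplane. -/
def hyp {m : ℕ} (Γ : Finset (Projectivization K (Fin m → K))) : ℕ :=
  sSup {k | ∃ φ : Module.Dual K (Fin m → K), φ ≠ 0 ∧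
    k = (Γ.filter fun P => φ P.rep = 0).card}

/-- the minimum distance `d(Γ) = |Γ| - hyp(Γ)`. -/
def minDist {m : ℕ} (Γ : Finset (Projectivization K (Fin m → K))) : ℕ :=
  Γ.card - hyp Γ

/-- `Γ` is non-degenerate: it is not contained in any hyperplane. -/
def Nondeg {m : ℕ} (Γ : Finset (Projectivization K (Fin m → K))) : Prop :=
  ∀ φ : Module.Dual K (Fin m → K), (∀ P ∈ Γ, φ P.rep = 0) → φ = 0

/-- The higher minimum distance `d(Γ)ₐ = |Γ| - max{|Γ'| : Γ' ⊆ Γ, dim I(Γ')ₐ > dim I(Γ)ₐ}`. -/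
def higherD {m : ℕ} (Γ : Finset (Projectivization K (Fin m → K))) (a : ℕ) : ℕ :=
  Γ.card - sSup {k | ∃ Γ' ⊆ Γ,
    hdim (vanishingIdeal (Γ' : Set (Projectivization K (Fin m → K)))) a >
      hdim (vanishingIdeal (Γ : Set (Projectivization K (Fin m → K)))) a ∧ k = Γ'.card}

open Classical in
/-- The degree `δ(P)` of a point `P` in `Γ`: the least degree in which the ideal
of `Γ \ {P}` is strictly bigger than the ideal of `Γ`. -/
def pointDegree {m : ℕ} (Γ : Finset (Projectivization K (Fin m → K)))
    (P : Projectivization K (Fin m → K)) : ℕ :=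
  sInf {d | hdim (vanishingIdeal ((Γ.erase P) : Set (Projectivization K (Fin m → K)))) d >
    hdim (vanishingIdeal (Γ : Set (Projectivization K (Fin m → K)))) d}

/-- A graded minimal free resolution
`0 → F_len → ⋯ → F_1 → R → R/I → 0` of `R/I`, `R = K[x_0,…,x_{N-1}]`.
`F_j = ⊕_{i : Fin (rk j)} R(-(twist j i))` for `1 ≤ j ≤ len`.
The differential `F_1 → R` is given by `gen` (so that its image is `I`) and the
differential `F_{j+2} → F_{j+1}` is given (in matrix form, rows indexed by the
target) by `mat j`.  All entries are homogeneous of the appropriate degrees, and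
minimality means all entries lie in the irrelevant maximal ideal
(zero constant coefficient). -/
structure MinFreeRes (N : ℕ) (K : Type) [Field K] (I : Ideal (MvPolynomial (Fin N) K)) where
  len : ℕ
  rk : ℕ → ℕ
  twist : (j : ℕ) → Fin (rk j) → ℕ
  gen : Fin (rk 1) → MvPolynomial (Fin N) K
  mat : (j : ℕ) → Matrix (Fin (rk (j + 1))) (Fin (rk (j + 2))) (MvPolynomial (Fin N) K)
  rk_len_pos : 0 < rk len
  rk_eq_zero : ∀ j, len < j → rk j = 0
  gen_hom : ∀ i, (gen i).IsHomogeneous (twist 1 i)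
  gen_min : ∀ i, constantCoeff (gen i) = 0
  gen_span : Ideal.span (Set.range gen) = I
  mat_hom : ∀ j i i', mat j i i' = 0 ∨
    ∃ d, (mat j i i').IsHomogeneous d ∧ d + twist (j + 1) i = twist (j + 2) i'
  mat_min : ∀ j i i', constantCoeff (mat j i i') = 0
  exact_one : ∀ v : Fin (rk 1) → MvPolynomial (Fin N) K,
    (∑ i, v i * gen i = 0) ↔ v ∈ LinearMap.range (mat 0).mulVecLin
  exact_rest : ∀ j, LinearMap.ker (mat j).mulVecLin = LinearMap.range (mat (j + 1)).mulVecLin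

/-- `a(Γ)`: the minimal twist `min_i {a_i}` occurring in the last module
`F_len = ⊕ R(-a_i)` of the minimal free resolution. -/
def MinFreeRes.aMin {N : ℕ} {K : Type} [Field K] {I : Ideal (MvPolynomial (Fin N) K)}
    (res : MinFreeRes N K I) : ℕ :=
  Finset.univ.inf'
    (Finset.univ_nonempty_iff.mpr (Fin.pos_iff_nonempty.mp res.rk_len_pos))
    (fun i => res.twist res.len i)

/-- The minimum socle degree `A_n = min_i {a_i - n}` (here `n = len`, the length of
the resolution). -/
def MinFreeRes.A {N : ℕ} {K : Type} [Field K] {I : Ideal (MvPolynomial (Fin N) K)}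
    (res : MinFreeRes N K I) : ℤ :=
  (res.aMin : ℤ) - res.len



theorem homogeneousSubmodule_zero_eq {m : ℕ} {K : Type} [Field K] :
    homogeneousSubmodule (Fin m) K 0 = Submodule.span K {(1 : MvPolynomial (Fin m) K)} := by
  ext f
  simp only [mem_homogeneousSubmodule, Submodule.mem_span_singleton]
  constructor
  · intro hf
    have h0 : f.totalDegree = 0 := by
      rw [totalDegree_zero_iff_isHomogeneous]; exact hf
    rw [totalDegree_eq_zero_iff] at h0
    have hC : f = C (coeff 0 f) := by
      ext d
      rcases eq_or_ne d 0 with rfl | hd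
      · simp [coeff_C]
      · have : coeff d f = 0 := by
          by_contra hc
          exact hd (Finsupp.ext fun x => h0 d (mem_support_iff.mpr hc) x)
        simp [coeff_C, Ne.symm hd, this]
    exact ⟨coeff 0 f, by rw [smul_eq_C_mul, mul_one]; exact hC.symm⟩
  · rintro ⟨c, rfl⟩
    rw [smul_eq_C_mul, mul_one]
    exact isHomogeneous_C (Fin m) c

theorem mem_vanishingIdeal_iff {m : ℕ} {K : Type} [Field K]
    (Γ : Set (Projectivization K (Fin m → K))) (f : MvPolynomial (Fin m) K) :
    f ∈ vanishingIdeal Γ ↔ ∀ P ∈ Γ, ∀ (v : Fin m → K) (hv : v ≠ 0),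
      Projectivization.mk K v hv = P → MvPolynomial.eval v f = 0 := Iff.rfl

theorem hdim_empty_zero {m : ℕ} {K : Type} [Field K] :
    hdim (vanishingIdeal (∅ : Set (Projectivization K (Fin m → K)))) 0 = 1 := by
  have h1 : degPart (vanishingIdeal (∅ : Set (Projectivization K (Fin m → K)))) 0
      = homogeneousSubmodule (Fin m) K 0 := by
    ext f
    simp only [degPart, Submodule.mem_inf, Submodule.restrictScalars_mem,
      mem_vanishingIdeal_iff, Set.mem_empty_iff_false, false_implies, implies_true, true_and]
  rw [hdim, h1, homogeneousSubmodule_zero_eq]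
  exact finrank_span_singleton one_ne_zero

theorem hdim_singleton_zero {m : ℕ} {K : Type} [Field K]
    (P : Projectivization K (Fin m → K)) :
    hdim (vanishingIdeal ({P} : Set (Projectivization K (Fin m → K)))) 0 = 0 := by
  have h1 : degPart (vanishingIdeal ({P} : Set (Projectivization K (Fin m → K)))) 0 = ⊥ := by
    ext f
    simp only [degPart, Submodule.mem_inf, Submodule.restrictScalars_mem,
      mem_vanishingIdeal_iff, Set.mem_singleton_iff, Submodule.mem_bot,
      mem_homogeneousSubmodule]
    constructor
    · rintro ⟨hvan, hhom⟩
      have h0 : f.totalDegree = 0 := by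
        rw [totalDegree_zero_iff_isHomogeneous]; exact hhom
      rw [totalDegree_eq_zero_iff] at h0
      have hC : f = C (coeff 0 f) := by
        ext d
        rcases eq_or_ne d 0 with rfl | hd
        · simp [coeff_C]
        · have : coeff d f = 0 := by
            by_contra hc
            exact hd (Finsupp.ext fun x => h0 d (mem_support_iff.mpr hc) x)
          simp [coeff_C, Ne.symm hd, this]
      have := hvan P rfl P.rep P.rep_nonzero P.mk_rep
      rw [hC] at this ⊢
      simp only [eval_C] at this
      rw [this, map_zero]
    · rintro rfl
      exact ⟨fun _ _ _ _ _ => by simp, isHomogeneous_zero _ _ _⟩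
  rw [hdim, h1, finrank_bot]

/-- If `δ = min {δ(P) : P ∈ Γ} ≥ 2`, then `d(Γ)_(δ-1) ≥ 2`. -/
theorem higherD_delta_sub_one_ge_two
    {K : Type} [Field K] [CharZero K] {n : ℕ}
    (Γ : Finset (Projectivization K (Fin (n + 1) → K)))
    (hnd : Nondeg Γ) (hne : Γ.Nonempty)
    (δ : ℕ) (hδ : δ = Γ.inf' hne (fun P => pointDegree Γ P))
    (hδ2 : 2 ≤ δ) :
    2 ≤ higherD Γ (δ - 1) := by
  classical
  -- For every `P ∈ Γ`, erasing `P` does not change the ideal in degree `δ - 1`.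
  have hkey : ∀ P ∈ Γ, ¬ (hdim (vanishingIdeal ((Γ.erase P) :
      Set (Projectivization K (Fin (n + 1) → K)))) (δ - 1) >
      hdim (vanishingIdeal (Γ : Set (Projectivization K (Fin (n + 1) → K)))) (δ - 1)) := by
    intro P hP
    have hle : δ ≤ pointDegree Γ P := hδ ▸ Finset.inf'_le _ hP
    have hlt : δ - 1 < pointDegree Γ P := lt_of_lt_of_le (by omega) hle
    intro hgt
    have h2 : pointDegree Γ P ≤ δ - 1 := Nat.sInf_le hgt
    omega
  -- `Γ` has at least two points.
  have hcard2 : 2 ≤ Γ.card := by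
    by_contra hc
    obtain ⟨P, rfl⟩ : ∃ P, Γ = {P} := by
      obtain ⟨P, hP⟩ := hne
      exact ⟨P, Finset.eq_singleton_iff_unique_mem.mpr ⟨hP, fun Q hQ => by
        by_contra hQP
        have : 2 ≤ Γ.card := Finset.one_lt_card.mpr ⟨Q, hQ, P, hP, hQP⟩
        omega⟩⟩
    have hpd : pointDegree {P} P = 0 := by
      have h0 : (0 : ℕ) ∈ {d | hdim (vanishingIdeal ((({P} : Finset
          (Projectivization K (Fin (n + 1) → K))).erase P) :
          Set (Projectivization K (Fin (n + 1) → K)))) d >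
          hdim (vanishingIdeal (({P} : Finset (Projectivization K (Fin (n + 1) → K))) :
          Set (Projectivization K (Fin (n + 1) → K)))) d} := by
        simp only [Set.mem_setOf_eq, Finset.erase_singleton, Finset.coe_empty,
          Finset.coe_singleton]
        rw [hdim_empty_zero, hdim_singleton_zero]
        exact Nat.zero_lt_one
      exact Nat.eq_zero_of_le_zero (Nat.sInf_le h0)
    have : δ = 0 := by
      rw [hδ, Finset.inf'_singleton, hpd]
    omega
  -- Every witness set has cardinality at most `Γ.card - 2`.
  set S : Set ℕ := {k | ∃ Γ' ⊆ Γ,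
    hdim (vanishingIdeal ((Γ' : Finset (Projectivization K (Fin (n + 1) → K))) :
      Set (Projectivization K (Fin (n + 1) → K)))) (δ - 1) >
      hdim (vanishingIdeal (Γ : Set (Projectivization K (Fin (n + 1) → K)))) (δ - 1) ∧
      k = Γ'.card} with hS
  have hbound : ∀ k ∈ S, k + 2 ≤ Γ.card := by
    rintro k ⟨Γ', hsub, hgt, rfl⟩
    have hne' : Γ' ≠ Γ := by
      rintro rfl
      exact lt_irrefl _ hgt
    have hlt : Γ'.card < Γ.card := Finset.card_lt_card (lt_of_le_of_ne hsub hne')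
    rcases eq_or_ne (Γ'.card + 1) Γ.card with heq | hne2
    · exfalso
      have hsd : (Γ \ Γ').card = 1 := by
        rw [Finset.card_sdiff_of_subset hsub]; omega
      obtain ⟨P, hPeq⟩ := Finset.card_eq_one.mp hsd
      have hPΓ : P ∈ Γ := by
        have : P ∈ Γ \ Γ' := hPeq ▸ Finset.mem_singleton_self P
        exact (Finset.mem_sdiff.mp this).1
      have hΓ' : Γ' = Γ.erase P := by
        rw [Finset.erase_eq, ← hPeq, Finset.sdiff_sdiff_self_left,
          Finset.inter_eq_right.mpr hsub]
      rw [hΓ'] at hgt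
      exact hkey P hPΓ hgt
    · omega
  -- Conclude.
  rw [higherD]
  rcases Set.eq_empty_or_nonempty S with hSe | hSne
  · rw [show  {k | ∃ Γ' ⊆ Γ,
      hdim (vanishingIdeal ((Γ' : Finset (Projectivization K (Fin (n + 1) → K))) :
        Set (Projectivization K (Fin (n + 1) → K)))) (δ - 1) >
        hdim (vanishingIdeal (Γ : Set (Projectivization K (Fin (n + 1) → K)))) (δ - 1) ∧
        k = Γ'.card} = S from rfl, hSe, csSup_empty]
    simp only [Nat.bot_eq_zero]
    omega
  · have hbdd : BddAbove S := ⟨Γ.card, fun k hk => by have := hbound k hk; omega⟩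
    have hmem : sSup S ∈ S := Nat.sSup_mem hSne hbdd
    have := hbound _ hmem
    rw [show  {k | ∃ Γ' ⊆ Γ,
      hdim (vanishingIdeal ((Γ' : Finset (Projectivization K (Fin (n + 1) → K))) :
        Set (Projectivization K (Fin (n + 1) → K)))) (δ - 1) >
        hdim (vanishingIdeal (Γ : Set (Projectivization K (Fin (n + 1) → K)))) (δ - 1) ∧
        k = Γ'.card} = S from rfl]
    omega


end PointsMinDist
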